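/- If X ≻ 0, Q̂ := X⁻¹ − S ≻ 0 for a symmetric matrix S ≽ 0, and −X + A_cl Q̂⁻¹ A_clᵀ ≺ 0, then A_clᵀ X⁻¹ A_cl − X⁻¹ + S ≺ 0. -/

import Mathlib

open Matrix

open scoped Matrix in
private lemma posDef_fromBlocks₂₂ {m l : Type*} [Fintype m] [Fintype l] [DecidableEq l]
    {A : Matrix m m ℝ} (B : Matrix m l ℝ) {D : Matrix l l ℝ}
    (hA : A.IsHermitian) (hD : D.PosDef) [Invertible D]
    (hschur : (A - B * D⁻¹ * Bᴴ).PosDef) :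
    (fromBlocks A B Bᴴ D).PosDef := by
  refine PosDef.of_dotProduct_mulVec_pos (Matrix.isHermitian_fromBlocks_iff.2 ⟨hA, rfl, (conjTranspose_conjTranspose B), hD.1⟩)
    (fun z hz => ?_)
  rw [← Sum.elim_comp_inl_inr z, dotProduct_mulVec,
    schur_complement_eq₂₂ A B (z ∘ Sum.inl) (z ∘ Sum.inr) hD.1]
  by_cases hx : z ∘ Sum.inl = 0
  · have hy : z ∘ Sum.inr ≠ 0 := by
      intro hy
      apply hz
      ext (i | i)
      · exact congrFun hx i
      · exact congrFun hy i
    rw [hx]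
    simp only [mulVec_zero, zero_add, dotProduct_zero, add_zero]
    have := hD.dotProduct_mulVec_pos hy
    rw [dotProduct_mulVec] at this
    simpa using this
  · have h1 : 0 ≤ (star ((D⁻¹ * Bᴴ) *ᵥ (z ∘ Sum.inl) + z ∘ Sum.inr)) ᵥ* D ⬝ᵥ
        ((D⁻¹ * Bᴴ) *ᵥ (z ∘ Sum.inl) + z ∘ Sum.inr) := by
      rw [← dotProduct_mulVec]
      exact hD.posSemidef.dotProduct_mulVec_nonneg _
    have h2 : 0 < (star (z ∘ Sum.inl)) ᵥ* (A - B * D⁻¹ * Bᴴ) ⬝ᵥ (z ∘ Sum.inl) := by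
      rw [← dotProduct_mulVec]
      exact hschur.dotProduct_mulVec_pos hx
    linarith

open scoped Matrix in
private lemma posDef_schur₁₁ {m l : Type*} [Fintype m] [DecidableEq m] [Fintype l]
    {A : Matrix m m ℝ} (B : Matrix m l ℝ) (D : Matrix l l ℝ)
    (hA : A.PosDef) [Invertible A]
    (hM : (fromBlocks A B Bᴴ D).PosDef) :
    (D - Bᴴ * A⁻¹ * B).PosDef := by
  have herm : (D - Bᴴ * A⁻¹ * B).IsHermitian :=
    (IsHermitian.fromBlocks₁₁ B D hA.1).1 hM.1
  refine PosDef.of_dotProduct_mulVec_pos herm (fun y hy => ?_)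
  have hz : (-((A⁻¹ * B) *ᵥ y) ⊕ᵥ y) ≠ 0 := by
    intro hzz
    apply hy
    ext i
    exact congrFun hzz (Sum.inr i)
  have := hM.dotProduct_mulVec_pos hz
  rw [dotProduct_mulVec, schur_complement_eq₁₁ B D _ _ hA.1, neg_add_cancel, dotProduct_zero,
    zero_add] at this
  rw [dotProduct_mulVec]
  exact this

/-- Double-Schur-complement step: if `X ≻ 0`, `Q̂ := X⁻¹ − S ≻ 0` for a symmetric `S ≽ 0`,
and `−X + A_cl Q̂⁻¹ A_clᵀ ≺ 0`, then `A_clᵀ X⁻¹ A_cl − X⁻¹ + S ≺ 0`. -/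
theorem double_schur_step {n : ℕ}
    (X S Acl : Matrix (Fin n) (Fin n) ℝ)
    (hX : X.PosDef) (hS : S.PosSemidef)
    (hQ : (X⁻¹ - S).PosDef)
    (h : (-(-X + Acl * (X⁻¹ - S)⁻¹ * Aclᵀ)).PosDef) :
    (-(Aclᵀ * X⁻¹ * Acl - X⁻¹ + S)).PosDef := by
  have hBH : (Acl)ᴴ = Aclᵀ := rfl
  haveI : Invertible (X⁻¹ - S) := hQ.isUnit.invertible
  haveI : Invertible X := hX.isUnit.invertible
  have hschur : (X - Acl * (X⁻¹ - S)⁻¹ * Aclᵀ).PosDef := by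
    have : X - Acl * (X⁻¹ - S)⁻¹ * Aclᵀ = -(-X + Acl * (X⁻¹ - S)⁻¹ * Aclᵀ) := by abel
    rw [this]; exact h
  have hM : (fromBlocks X Acl (Acl)ᴴ (X⁻¹ - S)).PosDef := by
    apply posDef_fromBlocks₂₂ Acl hX.1 hQ
    rw [hBH]; exact hschur
  have := posDef_schur₁₁ Acl (X⁻¹ - S) hX hM
  rw [hBH] at this
  have heq : X⁻¹ - S - Aclᵀ * X⁻¹ * Acl = -(Aclᵀ * X⁻¹ * Acl - X⁻¹ + S) := by abel
  rw [heq] at this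
  exact this
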